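/- For every b ≥ 2 and every choice of positive integers v_2, ..., v_b with 1 ≤ v_i ≤ 2·3^{b-i}, there exists a unique v_1 with 4 ≤ v_1 ≤ 2·3^{b-1}+2 such that 2^{v_1+...+v_b} ≡ Σ_{i=1}^{b-1} 2^{Σ_{j=i+1}^{b} v_j}·3^{i-1} + 3^{b-1} (mod 3^b). -/

import Mathlib

lemma aux1 (z : ℤ) (t : ℕ) : ∃ c : ℤ, (1+z)^t = 1 + t*z + z^2*c := by
  induction t with
  | zero => exact ⟨0, by ring⟩
  | succ t ih =>
    obtain ⟨c, hc⟩ := ih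
    exact ⟨c + t + c*z, by rw [pow_succ, hc]; push_cast; ring⟩

lemma aux2 (j : ℕ) : ∃ u : ℤ, (4:ℤ)^(3^j) = 1 + 3^(j+1)*u ∧ ¬ (3:ℤ) ∣ u := by
  induction j with
  | zero => exact ⟨1, by norm_num, by norm_num⟩
  | succ j ih =>
    obtain ⟨u, hu, h3u⟩ := ih
    refine ⟨u + 3*(3^j * u^2 + 3^(2*j) * u^3), ?_, fun h => h3u ?_⟩
    · rw [pow_succ 3 j, pow_mul, hu]; ring
    · have := h.sub (dvd_mul_right 3 (3^j * u^2 + 3^(2*j) * u^3)); simpa using this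

lemma key2pow (b : ℕ) (hb : 1 ≤ b) (m : ℕ) :
    (2 : ZMod (3^b))^m = 1 ↔ 2*3^(b-1) ∣ m := by
  constructor
  · intro h
    have h1 : ((2^m : ℕ) : ZMod (3^b)) = ((1:ℕ) : ZMod (3^b)) := by push_cast; exact h
    have hmod : 2^m ≡ 1 [MOD 3^b] := (ZMod.natCast_eq_natCast_iff _ _ _).mp h1
    have hdvd : ((3:ℤ)^b) ∣ (2:ℤ)^m - 1 := by
      have := (Nat.modEq_iff_dvd).mp hmod
      push_cast at this
      rw [show (2:ℤ)^m - 1 = -((1:ℤ) - 2^m) by ring]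
      exact dvd_neg.mpr this
    -- even
    have h3 : ((-1 : ZMod 3))^m = 1 := by
      have hmap := congrArg (ZMod.castHom (dvd_pow_self 3 (by omega : b ≠ 0)) (ZMod 3)) h
      rw [map_pow, map_one, map_ofNat] at hmap
      rw [show ((-1 : ZMod 3)) = 2 by decide]
      exact hmap
    have hev : Even m := by
      by_contra hodd
      rw [(Odd.neg_one_pow (Nat.not_even_iff_odd.mp hodd))] at h3
      exact (by decide : ¬ ((-1 : ZMod 3) = 1)) h3
    obtain ⟨k, hk⟩ := hev
    rcases Nat.eq_zero_or_pos k with k0 | kpos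
    · subst hk k0; simp
    set j := k.factorization 3 with hj
    set t := k / 3^j with htdef
    have hkt : 3^j * t = k := Nat.ordProj_mul_ordCompl_eq_self k 3
    have h3t : ¬ (3:ℕ) ∣ t := Nat.not_dvd_ordCompl Nat.prime_three kpos.ne'
    obtain ⟨u, hu, h3u⟩ := aux2 j
    obtain ⟨c, hc⟩ := aux1 (3^(j+1)*u) t
    have h4k : (4:ℤ)^k = 1 + 3^(j+1) * (t*u + 3^(j+1)*u^2*c) := by
      rw [← hkt, pow_mul, hu, hc]; ring
    have hdvd4 : ((3:ℤ)^b) ∣ (4:ℤ)^k - 1 := by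
      have : (2:ℤ)^m = (4:ℤ)^k := by
        rw [hk, show k+k = 2*k by ring, pow_mul]; norm_num
      rwa [this] at hdvd
    have hw3 : ¬ (3:ℤ) ∣ (t*u + 3^(j+1)*u^2*c) := by
      intro h
      have h2 : (3:ℤ) ∣ t*u := by
        have := h.sub (Dvd.intro _ (by rw [pow_succ]; ring : 3^(j+1)*u^2*c = 3 * (3^j*u^2*c)).symm)
        simpa using this
      rcases (Int.Prime.dvd_mul' Nat.prime_three h2) with h' | h'
      · exact h3t (Int.ofNat_dvd.mp (by exact_mod_cast h'))
      · exact h3u h'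
    have hble : b ≤ j+1 := by
      by_contra hgt
      have hfac : (4:ℤ)^k - 1 = 3^(j+1) * (t*u + 3^(j+1)*u^2*c) := by rw [h4k]; ring
      have h2 : ((3:ℤ)^(j+2)) ∣ (3:ℤ)^(j+1) * (t*u + 3^(j+1)*u^2*c) :=
        hfac ▸ ((pow_dvd_pow (3:ℤ) (by omega : j+2 ≤ b)).trans hdvd4)
      rw [pow_succ] at h2
      exact hw3 ((mul_dvd_mul_iff_left (pow_ne_zero (j+1) (by norm_num : (3:ℤ) ≠ 0))).mp h2)
    have hjk : (3:ℕ)^(b-1) ∣ k := dvd_trans (pow_dvd_pow 3 (by omega : b-1 ≤ j)) (hkt ▸ dvd_mul_right (3^j) t)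
    obtain ⟨s, hs⟩ := hjk
    exact ⟨s, by rw [hk, hs]; ring⟩
  · rintro ⟨t, rfl⟩
    obtain ⟨u, hu, -⟩ := aux2 (b-1)
    have h0 : ((3:ZMod (3^b)))^b = 0 := by
      have : ((3^b : ℕ) : ZMod (3^b)) = 0 := ZMod.natCast_self _
      push_cast at this; exact this
    have h41 : (4 : ZMod (3^b))^(3^(b-1)) = 1 := by
      have := congrArg (Int.cast : ℤ → ZMod (3^b)) hu
      push_cast at this
      rw [show b-1+1 = b by omega, h0] at this
      simpa using this
    rw [pow_mul, pow_mul, show (2 : ZMod (3^b))^2 = 4 by norm_num, h41, one_pow]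

lemma main_aux (b : ℕ) (hb : 1 ≤ b) (R : ℕ) (hR : Nat.Coprime R (3^b)) :
    ∃ e : ℕ, ∀ a : ℕ, ((2 : ZMod (3^b))^a = (R : ZMod (3^b)) ↔ a ≡ e [MOD 2*3^(b-1)]) := by
  haveI : NeZero (3^b) := ⟨pow_ne_zero _ (by norm_num)⟩
  have hcop2 : Nat.Coprime 2 (3^b) := Nat.Coprime.pow_right b (by decide)
  set u : (ZMod (3^b))ˣ := ZMod.unitOfCoprime 2 hcop2 with hu
  have hval : (u : ZMod (3^b)) = 2 := by
    rw [hu, ZMod.coe_unitOfCoprime]; norm_num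
  have hord : orderOf u = 2*3^(b-1) := by
    apply Nat.dvd_antisymm
    · apply orderOf_dvd_of_pow_eq_one
      apply Units.ext
      rw [Units.val_pow_eq_pow_val, hval, Units.val_one]
      exact (key2pow b hb _).mpr dvd_rfl
    · apply (key2pow b hb _).mp
      rw [← hval, ← Units.val_pow_eq_pow_val, pow_orderOf_eq_one, Units.val_one]
  set r : (ZMod (3^b))ˣ := ZMod.unitOfCoprime R hR with hr
  have hrval : (r : ZMod (3^b)) = (R : ZMod (3^b)) := ZMod.coe_unitOfCoprime R hR
  have htop : Subgroup.zpowers u = ⊤ := by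
    apply Subgroup.eq_top_of_card_eq
    rw [Nat.card_zpowers, hord, Nat.card_eq_fintype_card, ZMod.card_units_eq_totient,
      Nat.totient_prime_pow Nat.prime_three (by omega)]
    ring
  have hmem : r ∈ Submonoid.powers u := by
    rw [mem_powers_iff_mem_zpowers, htop]
    trivial
  obtain ⟨e, he⟩ := hmem
  refine ⟨e, fun a => ?_⟩
  have he' : u^e = r := he
  have h2 : ((u^e : (ZMod (3^b))ˣ) : ZMod (3^b)) = (R : ZMod (3^b)) := by rw [he']; exact hrval
  have h1 : (2 : ZMod (3^b))^a = (R : ZMod (3^b)) ↔ u^a = u^e := by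
    rw [Units.ext_iff, h2, Units.val_pow_eq_pow_val, hval]
  rw [h1, ← hord]
  exact pow_eq_pow_iff_modEq


lemma zmod3_two_ne : (2:ZMod 3) ≠ 0 := by decide
lemma zmod3_pow3 : (2:ZMod 3)^3 = 2 := by decide

theorem stmt2 (b : ℕ) (hb : 2 ≤ b) (v : ℕ → ℕ)
    (hv : ∀ i, 2 ≤ i → i ≤ b → 1 ≤ v i ∧ v i ≤ 2 * 3 ^ (b - i)) :
    ∃! v1 : ℕ, (4 ≤ v1 ∧ v1 ≤ 2 * 3 ^ (b - 1) + 2) ∧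
      2 ^ (v1 + ∑ i ∈ Finset.Icc 2 b, v i) ≡
        (∑ i ∈ Finset.Icc 1 (b - 1), 2 ^ (∑ j ∈ Finset.Icc (i + 1) b, v j) * 3 ^ (i - 1)) +
          3 ^ (b - 1) [MOD 3 ^ b] := by
  clear hv
  set S := ∑ i ∈ Finset.Icc 2 b, v i with hS
  set D := (∑ i ∈ Finset.Icc 2 (b-1), 2 ^ (∑ j ∈ Finset.Icc (i+1) b, v j) * 3 ^ (i-1)) + 3^(b-1) with hD
  have hsplit : (∑ i ∈ Finset.Icc 1 (b-1), 2 ^ (∑ j ∈ Finset.Icc (i+1) b, v j) * 3 ^ (i-1)) + 3^(b-1)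
      = 2^S + D := by
    have hins : Finset.Icc 1 (b-1) = insert 1 (Finset.Icc 2 (b-1)) := by
      ext x; simp only [Finset.mem_Icc, Finset.mem_insert]; omega
    rw [hins, Finset.sum_insert (by simp), hD]
    simp only [show (1:ℕ)+1 = 2 from rfl, Nat.sub_self, pow_zero, mul_one, ← hS]
    omega
  rw [hsplit]
  set R := 2^S + D with hRdef
  have hD3 : 3 ∣ D := by
    apply dvd_add
    · apply Finset.dvd_sum
      intro i hi
      simp only [Finset.mem_Icc] at hi
      exact Dvd.dvd.mul_left (dvd_pow_self 3 (by omega : i-1 ≠ 0)) _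
    · exact dvd_pow_self 3 (by omega : b-1 ≠ 0)
  have hR3 : ¬ (3:ℕ) ∣ R := by
    obtain ⟨q, hq⟩ := hD3
    intro h
    have h2S : (3:ℕ) ∣ 2^S := by omega
    have := Nat.prime_three.dvd_of_dvd_pow h2S
    norm_num at this
  have hcop : Nat.Coprime R (3^b) :=
    (Nat.Coprime.pow_left b ((Nat.Prime.coprime_iff_not_dvd Nat.prime_three).mpr hR3)).symm
  obtain ⟨e, he⟩ := main_aux b (by omega) R hcop
  set n := 2*3^(b-1) with hn
  have h3b1 : 3 ≤ 3^(b-1) := by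
    calc (3:ℕ) = 3^1 := (pow_one 3).symm
    _ ≤ 3^(b-1) := Nat.pow_le_pow_right (by norm_num) (by omega)
  have hn6 : 6 ≤ n := by omega
  -- translate the congruence
  have hiff : ∀ a : ℕ, (2^a ≡ R [MOD 3^b]) ↔ a ≡ e [MOD n] := by
    intro a
    rw [← he a]
    constructor
    · intro h
      have := (ZMod.natCast_eq_natCast_iff _ _ _).mpr h
      push_cast at this
      exact this
    · intro h
      apply (ZMod.natCast_eq_natCast_iff _ _ _).mp
      push_cast
      exact h
  -- the residue c
  set c := (e + n*(S+1) - S) % n with hc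
  have hcn : c < n := Nat.mod_lt _ (by omega)
  have hcS : c + S ≡ e [MOD n] := by
    have h1 : c + S ≡ (e + n*(S+1) - S) + S [MOD n] := Nat.ModEq.add_right S (Nat.mod_modEq _ n)
    have h2 : (e + n*(S+1) - S) + S = e + n*(S+1) := by
      have : S ≤ n*(S+1) := by nlinarith
      omega
    rw [h2] at h1
    refine h1.trans ?_
    calc e + n*(S+1) ≡ e + 0 [MOD n] :=
          Nat.ModEq.add_left e ((Nat.modEq_zero_iff_dvd).mpr ⟨S+1, rfl⟩)
    _ = e := by omega
  have hiff2 : ∀ a : ℕ, (a + S ≡ e [MOD n]) ↔ a ≡ c [MOD n] := by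
    intro a
    constructor
    · intro h
      exact Nat.ModEq.add_right_cancel' S (h.trans hcS.symm)
    · intro h
      exact (h.add_right S).trans hcS
  have hc3 : c ≠ 3 := by
    intro h3
    have hcong : 2^(3+S) ≡ R [MOD 3^b] := by
      rw [hiff, hiff2]
      exact h3 ▸ Nat.ModEq.refl _
    haveI : Fact (Nat.Prime 3) := ⟨Nat.prime_three⟩
    have hz := (ZMod.natCast_eq_natCast_iff (2^(3+S)) R 3).mpr
      (hcong.of_dvd (dvd_pow_self 3 (by omega : b ≠ 0)))
    push_cast at hz
    rw [hRdef] at hz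
    push_cast at hz
    have hDz : ((D:ℕ) : ZMod 3) = 0 := (ZMod.natCast_eq_zero_iff D 3).mpr hD3
    rw [hDz, add_zero, pow_add] at hz
    have hne : ((2:ZMod 3))^S ≠ 0 := pow_ne_zero S zmod3_two_ne
    apply hne
    rw [zmod3_pow3] at hz
    linear_combination hz
  -- final arithmetic
  set w := if 4 ≤ c then c else c + n with hw
  have hwb : 4 ≤ w ∧ w ≤ n + 2 := by
    rw [hw]; split <;> omega
  have hwc : w ≡ c [MOD n] := by
    rw [hw]; split
    · rfl
    · calc c + n ≡ c + 0 [MOD n] := Nat.ModEq.add_left c ((Nat.modEq_zero_iff_dvd).mpr dvd_rfl)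
      _ = c := by omega
  refine ⟨w, ⟨hwb, ?_⟩, ?_⟩
  · rw [hiff, hiff2]; exact hwc
  · rintro y ⟨⟨hy4, hyn⟩, hyc⟩
    rw [hiff, hiff2] at hyc
    have hyw : y ≡ w [MOD n] := hyc.trans hwc.symm
    rcases le_or_gt y w with hle | hlt
    · have hd := (Nat.modEq_iff_dvd' hle).mp hyw
      have := Nat.eq_zero_of_dvd_of_lt hd (by omega : w - y < n)
      omega
    · have hd := (Nat.modEq_iff_dvd' hlt.le).mp hyw.symm
      have := Nat.eq_zero_of_dvd_of_lt hd (by omega : y - w < n)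
      omega
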